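/- Let u and v be vertices of a complete d-ary tree of height h, with least common ancestor c. Let u', v', c' be the depths (distances to the root) of u, v, c. Then the hitting time from u to v equals f_{h-c'}(d) - f_{h-u'}(d) + g_{h,v'}(d) - g_{h,c'}(d), where f and g are defined by f_0 = 0, f_n(d) = (Σ_{i=0}^{n-1}(2n-2i)d^i) - n for n ≥ 1, g_{k,0} = 0, g_{k,m}(d) = (Σ_{i=0}^{m-1}(2m-2i)d^{k-i}) - m for m ≥ 1. -/

import Mathlib

open scoped Classical

/-- Transition probability of the simple random walk on `G`. -/
noncomputable def stepProb {V : Type*} [Fintype V] (G : SimpleGraph V) (a b : V) : ℝ :=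
  if G.Adj a b then 1 / (G.degree a) else 0

/-- Probability that the simple random walk started at `u` follows the step sequence `w`. -/
noncomputable def walkProb {V : Type*} [Fintype V] (G : SimpleGraph V) :
    (u : V) → {n : ℕ} → (Fin n → V) → ℝ
  | _, 0, _ => 1
  | u, n + 1, w => stepProb G u (w 0) * walkProb G (w 0) (fun i : Fin n => w i.succ)

/-- Probability that the walk started at `u` first reaches `v` at time exactly `n` (for `n ≥ 1`). -/
noncomputable def firstHitProb {V : Type*} [Fintype V] (G : SimpleGraph V) (u v : V) (n : ℕ) : ℝ :=
  ∑ w ∈ Finset.univ.filter (fun w : Fin n → V =>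
      (∀ i : Fin n, (i : ℕ) + 1 < n → w i ≠ v) ∧ ∀ i : Fin n, (i : ℕ) + 1 = n → w i = v),
    walkProb G u w

/-- Expected hitting time of `v` for the simple random walk on `G` started at `u`. -/
noncomputable def hittingTime {V : Type*} [Fintype V] (G : SimpleGraph V) (u v : V) : ℝ :=
  if u = v then 0 else ∑' n : ℕ, (n : ℝ) * firstHitProb G u v n

/-- Expected first return time to `v` of the simple random walk on `G` started at `v`. -/
noncomputable def expectedReturnTime {V : Type*} [Fintype V] (G : SimpleGraph V) (v : V) : ℝ :=
  ∑' n : ℕ, (n : ℝ) * firstHitProb G v v n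
/-- The polynomial `f_n(d)` from the hitting-time formulas for complete `d`-ary trees. -/
noncomputable def f (n : ℕ) (d : ℝ) : ℝ :=
  if n = 0 then 0 else (∑ i ∈ Finset.range n, ((2 * n : ℝ) - 2 * i) * d ^ i) - n

/-- The polynomial `g_{k,m}(d)` from the hitting-time formulas for complete `d`-ary trees. -/
noncomputable def g (k m : ℕ) (d : ℝ) : ℝ :=
  if m = 0 then 0 else (∑ i ∈ Finset.range m, ((2 * m : ℝ) - 2 * i) * d ^ (k - i)) - m

/-- The complete `d`-ary tree of height `h`: vertices are sequences over `Fin d` of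
length at most `h`, and a vertex is adjacent to each of its one-step extensions. -/
def daryTree (d h : ℕ) : SimpleGraph (Σ n : Fin (h + 1), Fin (n : ℕ) → Fin d) :=
  SimpleGraph.fromRel (fun x y =>
    ∃ _ : (x.1 : ℕ) + 1 = (y.1 : ℕ),
      ∀ i : Fin (x.1 : ℕ), y.2 ⟨i.val, by have := i.isLt; omega⟩ = x.2 i)

/-- `a` is an ancestor of `x` in the complete `d`-ary tree: `a` is a prefix of `x`. -/
def isAncestor {d h : ℕ} (a x : Σ n : Fin (h + 1), Fin (n : ℕ) → Fin d) : Prop :=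
  ∃ _ : (a.1 : ℕ) ≤ (x.1 : ℕ),
    ∀ i : Fin (a.1 : ℕ), a.2 i = x.2 ⟨i.val, by have := i.isLt; omega⟩

namespace HT

variable {V : Type*} [Fintype V]

lemma stepProb_nonneg (G : SimpleGraph V) (a b : V) : 0 ≤ stepProb G a b := by
  unfold stepProb; split <;> positivity

lemma sum_stepProb_le_one (G : SimpleGraph V) (u : V) :
    ∑ x : V, stepProb G u x ≤ 1 := by
  classical
  have h1 : ∑ x : V, stepProb G u x
      = ∑ x ∈ Finset.univ.filter (fun x => G.Adj u x), (1 / (G.degree u : ℝ)) := by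
    rw [Finset.sum_filter]; rfl
  have h2 : Finset.univ.filter (fun x => G.Adj u x) = G.neighborFinset u := by
    ext x; simp [SimpleGraph.mem_neighborFinset]
  rw [h1, h2, Finset.sum_const, SimpleGraph.card_neighborFinset_eq_degree]
  rcases Nat.eq_zero_or_pos (G.degree u) with h | h
  · simp [h]
  · rw [nsmul_eq_mul]
    rw [mul_one_div, div_self (by positivity : (G.degree u : ℝ) ≠ 0)]

lemma sum_stepProb (G : SimpleGraph V) (u : V) (h : 0 < G.degree u) :
    ∑ x : V, stepProb G u x = 1 := by
  classical
  have h1 : ∑ x : V, stepProb G u x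
      = ∑ x ∈ Finset.univ.filter (fun x => G.Adj u x), (1 / (G.degree u : ℝ)) := by
    rw [Finset.sum_filter]; rfl
  have h2 : Finset.univ.filter (fun x => G.Adj u x) = G.neighborFinset u := by
    ext x; simp [SimpleGraph.mem_neighborFinset]
  rw [h1, h2, Finset.sum_const, SimpleGraph.card_neighborFinset_eq_degree, nsmul_eq_mul,
    mul_one_div, div_self (by positivity : (G.degree u : ℝ) ≠ 0)]

/-- Probability of avoiding `v` for `n` steps, defined recursively. -/
noncomputable def avoidR (G : SimpleGraph V) (v : V) : ℕ → V → ℝ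
  | 0, _ => 1
  | n + 1, u => ∑ x : V, if x = v then 0 else stepProb G u x * avoidR G v n x

lemma avoidR_nonneg (G : SimpleGraph V) (v : V) : ∀ n u, 0 ≤ avoidR G v n u
  | 0, u => by rw [avoidR]; norm_num
  | n + 1, u => by
      rw [avoidR]
      refine Finset.sum_nonneg fun x _ => ?_
      split
      · exact le_refl _
      · exact mul_nonneg (stepProb_nonneg G u x) (avoidR_nonneg G v n x)

lemma avoidR_le_one (G : SimpleGraph V) (v : V) : ∀ n u, avoidR G v n u ≤ 1
  | 0, u => by simp [avoidR]
  | n + 1, u => by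
      rw [avoidR]
      calc ∑ x : V, (if x = v then 0 else stepProb G u x * avoidR G v n x)
          ≤ ∑ x : V, stepProb G u x := by
            refine Finset.sum_le_sum fun x _ => ?_
            split
            · exact stepProb_nonneg G u x
            · calc stepProb G u x * avoidR G v n x
                  ≤ stepProb G u x * 1 :=
                    mul_le_mul_of_nonneg_left (avoidR_le_one G v n x) (stepProb_nonneg G u x)
                _ = stepProb G u x := mul_one _
        _ ≤ 1 := sum_stepProb_le_one G u

end HT
namespace HT
variable {V : Type*} [Fintype V]

lemma sum_fn_succ {n : ℕ} (F : (Fin (n + 1) → V) → ℝ) :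
    ∑ w : Fin (n + 1) → V, F w = ∑ x : V, ∑ w : Fin n → V, F (Fin.cons x w) := by
  rw [← Equiv.sum_comp (Fin.consEquiv fun _ => V) F, Fintype.sum_prod_type]
  rfl

lemma walkProb_cons {n : ℕ} (G : SimpleGraph V) (u x : V) (w : Fin n → V) :
    walkProb G u (Fin.cons x w) = stepProb G u x * walkProb G x w := by
  simp only [walkProb, Fin.cons_zero, Fin.cons_succ]

lemma firstHitProb_one (G : SimpleGraph V) (u v : V) :
    firstHitProb G u v 1 = stepProb G u v := by
  unfold firstHitProb
  rw [Finset.sum_filter, sum_fn_succ]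
  have : ∀ x : V, (∑ w : Fin 0 → V,
      if ((∀ i : Fin 1, (i : ℕ) + 1 < 1 → (Fin.cons x w : Fin 1 → V) i ≠ v) ∧
          ∀ i : Fin 1, (i : ℕ) + 1 = 1 → (Fin.cons x w : Fin 1 → V) i = v)
      then walkProb G u (Fin.cons x w) else 0)
      = if x = v then stepProb G u v else 0 := by
    intro x
    rw [Fintype.sum_unique]
    by_cases hx : x = v
    · subst hx
      rw [if_pos, if_pos rfl]
      · simp [walkProb_cons, walkProb]
      · constructor
        · intro i hi; omega
        · intro i _
          have : i = 0 := Subsingleton.elim _ _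
          subst this; simp
    · rw [if_neg, if_neg hx]
      rintro ⟨-, h2⟩
      exact hx (by simpa using h2 0 rfl)
  rw [Finset.sum_congr rfl fun x _ => this x, Finset.sum_ite_eq' Finset.univ v
    fun _ => stepProb G u v, if_pos (Finset.mem_univ v)]

lemma firstHitProb_succ_succ (G : SimpleGraph V) (u v : V) (n : ℕ) :
    firstHitProb G u v (n + 2)
      = ∑ x : V, if x = v then 0 else stepProb G u x * firstHitProb G x v (n + 1) := by
  have hP : ∀ (x : V) (w' : Fin (n + 1) → V),
      ((∀ i : Fin (n + 2), (i : ℕ) + 1 < n + 2 → (Fin.cons x w' : Fin (n + 2) → V) i ≠ v) ∧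
       (∀ i : Fin (n + 2), (i : ℕ) + 1 = n + 2 → (Fin.cons x w' : Fin (n + 2) → V) i = v))
      ↔ (x ≠ v ∧ ((∀ i : Fin (n + 1), (i : ℕ) + 1 < n + 1 → w' i ≠ v) ∧
          (∀ i : Fin (n + 1), (i : ℕ) + 1 = n + 1 → w' i = v))) := by
    intro x w'
    constructor
    · rintro ⟨h1, h2⟩
      refine ⟨?_, fun i hi => ?_, fun i hi => ?_⟩
      · simpa using h1 0 (by simp only [Fin.val_zero]; omega)
      · simpa using h1 i.succ (by simp only [Fin.val_succ]; omega)
      · simpa using h2 i.succ (by simp only [Fin.val_succ]; omega)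
    · rintro ⟨hx, h1, h2⟩
      constructor
      · intro i
        induction i using Fin.cases with
        | zero => intro _; simpa using hx
        | succ j =>
          intro hj
          simp only [Fin.val_succ] at hj
          simpa using h1 j (by omega)
      · intro i
        induction i using Fin.cases with
        | zero =>
          intro h0
          exact absurd h0 (by simp only [Fin.val_zero]; omega)
        | succ j =>
          intro hj
          simp only [Fin.val_succ] at hj
          simpa using h2 j (by omega)
  unfold firstHitProb
  rw [Finset.sum_filter, sum_fn_succ]
  refine Finset.sum_congr rfl fun x _ => ?_
  by_cases hx : x = v
  · subst hx
    rw [if_pos rfl]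
    refine Finset.sum_eq_zero fun w' _ => ?_
    rw [if_neg]
    rw [hP]
    rintro ⟨h, -⟩
    exact h rfl
  · rw [if_neg hx, Finset.sum_filter, Finset.mul_sum]
    refine Finset.sum_congr rfl fun w' _ => ?_
    rw [walkProb_cons]
    by_cases hw : ((∀ i : Fin (n + 1), (i : ℕ) + 1 < n + 1 → w' i ≠ v) ∧
        (∀ i : Fin (n + 1), (i : ℕ) + 1 = n + 1 → w' i = v))
    · rw [if_pos ((hP x w').mpr ⟨hx, hw⟩), if_pos hw]
    · rw [if_neg, if_neg hw, mul_zero]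
      rw [hP]
      rintro ⟨-, h⟩
      exact hw h

end HT
namespace HT
variable {V : Type*} [Fintype V]

lemma walkProb_nonneg (G : SimpleGraph V) : ∀ {n : ℕ} (u : V) (w : Fin n → V),
    0 ≤ walkProb G u w
  | 0, u, w => by rw [walkProb]; norm_num
  | n + 1, u, w => by
      rw [walkProb]
      exact mul_nonneg (stepProb_nonneg G u _) (walkProb_nonneg G _ _)

lemma firstHitProb_nonneg (G : SimpleGraph V) (u v : V) (n : ℕ) :
    0 ≤ firstHitProb G u v n :=
  Finset.sum_nonneg fun w _ => walkProb_nonneg G u w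

lemma sum_ite_v (v : V) (f : V → ℝ) :
    ∑ x : V, (if x = v then 0 else f x) = (∑ x : V, f x) - f v := by
  rw [← Finset.sum_erase_add Finset.univ _ (Finset.mem_univ v),
    ← Finset.sum_erase_add Finset.univ f (Finset.mem_univ v)]
  have h1 : ∑ x ∈ Finset.univ.erase v, (if x = v then 0 else f x)
      = ∑ x ∈ Finset.univ.erase v, f x :=
    Finset.sum_congr rfl fun x hx => if_neg (Finset.ne_of_mem_erase hx)
  rw [h1, if_pos rfl]
  ring

lemma stepProb_pos (G : SimpleGraph V) {x z : V} (h : G.Adj x z) : 0 < stepProb G x z := by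
  have hd : 0 < G.degree x := by
    rw [← SimpleGraph.card_neighborFinset_eq_degree]
    exact Finset.card_pos.mpr ⟨z, (SimpleGraph.mem_neighborFinset G x z).mpr h⟩
  rw [stepProb, if_pos h]
  positivity

variable (G : SimpleGraph V) (v : V)

lemma avoidR_succ (n : ℕ) (u : V) :
    avoidR G v (n + 1) u = ∑ x : V, if x = v then 0 else stepProb G u x * avoidR G v n x := by
  rw [avoidR]

lemma fh_eq (hdeg : ∀ x : V, 0 < G.degree x) :
    ∀ (n : ℕ) (u : V), firstHitProb G u v (n + 1) = avoidR G v n u - avoidR G v (n + 1) u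
  | 0, u => by
      rw [firstHitProb_one, avoidR_succ, sum_ite_v v (fun x => stepProb G u x * avoidR G v 0 x)]
      have h0 : ∀ x : V, avoidR G v 0 x = 1 := fun x => by rw [avoidR]
      simp only [h0, mul_one]
      rw [sum_stepProb G u (hdeg u)]
      ring
  | n + 1, u => by
      rw [firstHitProb_succ_succ, avoidR_succ, avoidR_succ, ← Finset.sum_sub_distrib]
      refine Finset.sum_congr rfl fun x _ => ?_
      by_cases hx : x = v
      · simp [hx]
      · rw [if_neg hx, if_neg hx, if_neg hx, fh_eq hdeg n x]
        ring

lemma avoidR_mono : ∀ (n : ℕ) (u : V), avoidR G v (n + 1) u ≤ avoidR G v n u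
  | 0, u => by
      rw [show avoidR G v 0 u = 1 from by rw [avoidR]]
      exact avoidR_le_one G v 1 u
  | n + 1, u => by
      rw [avoidR_succ, avoidR_succ]
      refine Finset.sum_le_sum fun x _ => ?_
      by_cases hx : x = v
      · simp [hx]
      · rw [if_neg hx, if_neg hx]
        exact mul_le_mul_of_nonneg_left (avoidR_mono n x) (stepProb_nonneg G u x)

lemma avoidR_anti {a b : ℕ} (hab : a ≤ b) (u : V) : avoidR G v b u ≤ avoidR G v a u := by
  induction b, hab using Nat.le_induction with
  | base => exact le_refl _
  | succ n hn ih => exact (avoidR_mono G v n u).trans ih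

lemma avoidR_lt_one (hdeg : ∀ x : V, 0 < G.degree x) :
    ∀ (n : ℕ) (x : V), x ≠ v → (∃ p : G.Walk x v, p.length ≤ n) → avoidR G v n x < 1
  | 0, x, hx, ⟨p, hp⟩ => by
      exact absurd (SimpleGraph.Walk.eq_of_length_eq_zero (Nat.le_zero.mp hp)) hx
  | n + 1, x, hx, ⟨p, hp⟩ => by
      cases p with
      | nil => exact absurd rfl hx
      | @cons _ y _ hadj q =>
        rw [avoidR_succ]
        by_cases hy : y = v
        · calc ∑ z : V, (if z = v then 0 else stepProb G x z * avoidR G v n z)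
              ≤ ∑ z : V, (if z = v then 0 else stepProb G x z) := by
                refine Finset.sum_le_sum fun z _ => ?_
                by_cases hz : z = v
                · simp [hz]
                · rw [if_neg hz, if_neg hz]
                  calc stepProb G x z * avoidR G v n z ≤ stepProb G x z * 1 :=
                      mul_le_mul_of_nonneg_left (avoidR_le_one G v n z) (stepProb_nonneg G x z)
                    _ = stepProb G x z := mul_one _
            _ = (∑ z : V, stepProb G x z) - stepProb G x v := sum_ite_v v _
            _ = 1 - stepProb G x v := by rw [sum_stepProb G x (hdeg x)]
            _ < 1 := by
                have := stepProb_pos G (hy ▸ hadj)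
                linarith
        · have hq : avoidR G v n y < 1 := avoidR_lt_one hdeg n y hy
            ⟨q, by simpa using Nat.succ_le_succ_iff.mp (by simpa using hp)⟩
          calc ∑ z : V, (if z = v then 0 else stepProb G x z * avoidR G v n z)
              < ∑ z : V, (if z = v then 0 else stepProb G x z) := by
                refine Finset.sum_lt_sum (fun z _ => ?_) ⟨y, Finset.mem_univ y, ?_⟩
                · by_cases hz : z = v
                  · simp [hz]
                  · rw [if_neg hz, if_neg hz]
                    calc stepProb G x z * avoidR G v n z ≤ stepProb G x z * 1 :=
                        mul_le_mul_of_nonneg_left (avoidR_le_one G v n z) (stepProb_nonneg G x z)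
                      _ = stepProb G x z := mul_one _
                · rw [if_neg hy, if_neg hy]
                  have := stepProb_pos G hadj
                  nlinarith [avoidR_nonneg G v n y]
            _ = (∑ z : V, stepProb G x z) - stepProb G x v := sum_ite_v v _
            _ ≤ 1 - 0 := by
                rw [sum_stepProb G x (hdeg x)]
                have := stepProb_nonneg G x v
                linarith
            _ = 1 := by ring

end HT
namespace HT
variable {V : Type*} [Fintype V]

lemma sum_range_add' (f : ℕ → ℝ) (a b : ℕ) :
    ∑ n ∈ Finset.range (a + b), f n
      = ∑ n ∈ Finset.range a, f n + ∑ r ∈ Finset.range b, f (a + r) := by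
  induction b with
  | zero => simp
  | succ b ih => rw [Nat.add_succ, Finset.sum_range_succ, ih, Finset.sum_range_succ]; ring

lemma sum_pow_div_le {ρ : ℝ} (h0 : 0 ≤ ρ) (h1 : ρ < 1) {m : ℕ} (hm : 0 < m) (K : ℕ) :
    ∑ n ∈ Finset.range K, ρ ^ (n / m) ≤ (m : ℝ) * (1 - ρ)⁻¹ := by
  have key : ∀ c : ℕ, ∑ n ∈ Finset.range (c * m), ρ ^ (n / m)
      = ∑ k ∈ Finset.range c, (m : ℝ) * ρ ^ k := by
    intro c
    induction c with
    | zero => simp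
    | succ c ih =>
      rw [Nat.succ_mul, sum_range_add', ih, Finset.sum_range_succ]
      congr 1
      have hdiv : ∀ r, r < m → (c * m + r) / m = c := by
        intro r hr
        rw [add_comm, Nat.add_mul_div_right r c hm, Nat.div_eq_of_lt hr, Nat.zero_add]
      rw [Finset.sum_congr rfl fun r hr => by
        rw [hdiv r (Finset.mem_range.mp hr)]]
      rw [Finset.sum_const, Finset.card_range, nsmul_eq_mul]
  calc ∑ n ∈ Finset.range K, ρ ^ (n / m)
      ≤ ∑ n ∈ Finset.range (K * m), ρ ^ (n / m) := by
        refine Finset.sum_le_sum_of_subset_of_nonneg ?_ fun n _ _ => by positivity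
        exact Finset.range_subset_range.mpr (Nat.le_mul_of_pos_right K hm)
    _ = ∑ k ∈ Finset.range K, (m : ℝ) * ρ ^ k := key K
    _ = (m : ℝ) * ∑ k ∈ Finset.range K, ρ ^ k := by rw [Finset.mul_sum]
    _ ≤ (m : ℝ) * (1 - ρ)⁻¹ := by
        refine mul_le_mul_of_nonneg_left ?_ (by positivity)
        calc ∑ k ∈ Finset.range K, ρ ^ k
            ≤ ∑' k : ℕ, ρ ^ k :=
              Summable.sum_le_tsum _ (fun n _ => by positivity) (summable_geometric_of_lt_one h0 h1)
          _ = (1 - ρ)⁻¹ := tsum_geometric_of_lt_one h0 h1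

variable (G : SimpleGraph V) (v : V)

/-- The max of `avoidR` over vertices other than `v`. -/
noncomputable def maxAvoid (hne : (Finset.univ.erase v).Nonempty) (b : ℕ) : ℝ :=
  ((Finset.univ.erase v).image (avoidR G v b)).max' (hne.image _)

lemma le_maxAvoid (hne : (Finset.univ.erase v).Nonempty) (b : ℕ) {u : V} (hu : u ≠ v) :
    avoidR G v b u ≤ maxAvoid G v hne b :=
  Finset.le_max' _ _ (Finset.mem_image_of_mem _ (Finset.mem_erase.mpr ⟨hu, Finset.mem_univ u⟩))

lemma maxAvoid_nonneg (hne : (Finset.univ.erase v).Nonempty) (b : ℕ) :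
    0 ≤ maxAvoid G v hne b := by
  obtain ⟨x, hx⟩ := id hne
  exact (avoidR_nonneg G v b x).trans
    (le_maxAvoid G v hne b (Finset.ne_of_mem_erase hx))

lemma maxAvoid_lt_one (hne : (Finset.univ.erase v).Nonempty) (hdeg : ∀ x : V, 0 < G.degree x)
    {m : ℕ} (hwalk : ∀ x : V, x ≠ v → ∃ p : G.Walk x v, p.length ≤ m) :
    maxAvoid G v hne m < 1 := by
  have hmem := Finset.max'_mem ((Finset.univ.erase v).image (avoidR G v m)) (hne.image _)
  obtain ⟨x, hx, heq⟩ := Finset.mem_image.mp hmem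
  have hxv := Finset.ne_of_mem_erase hx
  rw [maxAvoid, ← heq]
  exact avoidR_lt_one G v hdeg m x hxv (hwalk x hxv)

lemma avoidR_add_le (hne : (Finset.univ.erase v).Nonempty) :
    ∀ (a : ℕ) (b : ℕ) (u : V), u ≠ v →
      avoidR G v (a + b) u ≤ avoidR G v a u * maxAvoid G v hne b
  | 0, b, u, hu => by
      rw [Nat.zero_add, show avoidR G v 0 u = 1 from by rw [avoidR], one_mul]
      exact le_maxAvoid G v hne b hu
  | a + 1, b, u, hu => by
      rw [show a + 1 + b = (a + b) + 1 from by omega, avoidR_succ, avoidR_succ,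
        Finset.sum_mul]
      refine Finset.sum_le_sum fun z _ => ?_
      by_cases hz : z = v
      · simp [hz]
      · rw [if_neg hz, if_neg hz, mul_assoc]
        exact mul_le_mul_of_nonneg_left (avoidR_add_le hne a b z hz) (stepProb_nonneg G u z)

lemma avoidR_le_pow (hne : (Finset.univ.erase v).Nonempty) {m : ℕ} (hm : 0 < m) :
    ∀ (n : ℕ) (u : V), u ≠ v → avoidR G v n u ≤ (maxAvoid G v hne m) ^ (n / m) := by
  set ρ := maxAvoid G v hne m with hρ
  have hρ0 : 0 ≤ ρ := maxAvoid_nonneg G v hne m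
  have key : ∀ (k : ℕ) (u : V), u ≠ v → avoidR G v (m * k) u ≤ ρ ^ k := by
    intro k
    induction k with
    | zero => intro u _; rw [Nat.mul_zero, show avoidR G v 0 u = 1 from by rw [avoidR], pow_zero]
    | succ k ih =>
      intro u hu
      calc avoidR G v (m * (k + 1)) u
          = avoidR G v (m * k + m) u := by rw [Nat.mul_succ]
        _ ≤ avoidR G v (m * k) u * ρ := avoidR_add_le G v hne (m * k) m u hu
        _ ≤ ρ ^ k * ρ := mul_le_mul_of_nonneg_right (ih u hu) hρ0
        _ = ρ ^ (k + 1) := by rw [pow_succ]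
  intro n u hu
  calc avoidR G v n u ≤ avoidR G v (m * (n / m)) u := by
        refine avoidR_anti G v ?_ u
        rw [Nat.mul_comm]
        exact Nat.div_mul_le_self n m
    _ ≤ ρ ^ (n / m) := key (n / m) u hu

end HT
namespace HT
open Filter Topology
variable {V : Type*} [Fintype V]
variable (G : SimpleGraph V) (v : V)

section Main
variable (hdeg : ∀ x : V, 0 < G.degree x) (hne : (Finset.univ.erase v).Nonempty)
  {m : ℕ} (hm : 0 < m) (hwalk : ∀ x : V, x ≠ v → ∃ p : G.Walk x v, p.length ≤ m)

include hdeg hne hm hwalk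

lemma summable_avoidR {u : V} (hu : u ≠ v) : Summable (fun n => avoidR G v n u) := by
  refine summable_of_sum_range_le (c := (m : ℝ) * (1 - maxAvoid G v hne m)⁻¹)
    (fun n => avoidR_nonneg G v n u) (fun K => ?_)
  calc ∑ n ∈ Finset.range K, avoidR G v n u
      ≤ ∑ n ∈ Finset.range K, (maxAvoid G v hne m) ^ (n / m) :=
        Finset.sum_le_sum fun n _ => avoidR_le_pow G v hne hm n u hu
    _ ≤ (m : ℝ) * (1 - maxAvoid G v hne m)⁻¹ :=
        sum_pow_div_le (maxAvoid_nonneg G v hne m) (maxAvoid_lt_one G v hne hdeg hwalk) hm K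

omit hdeg hne hm hwalk in
lemma partial_id (hdeg : ∀ x : V, 0 < G.degree x) : ∀ (M : ℕ) (u : V),
    ∑ n ∈ Finset.range (M + 1), (n : ℝ) * firstHitProb G u v n
      = (∑ n ∈ Finset.range M, avoidR G v n u) - M * avoidR G v M u := by
  intro M u
  induction M with
  | zero => simp [avoidR]
  | succ M ih =>
    rw [Finset.sum_range_succ, ih, fh_eq G v hdeg M u, Finset.sum_range_succ]
    push_cast
    ring

lemma summable_nfh {u : V} (hu : u ≠ v) :
    Summable (fun n : ℕ => (n : ℝ) * firstHitProb G u v n) := by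
  set ρ := maxAvoid G v hne m with hρdef
  have hρ0 := maxAvoid_nonneg G v hne m
  have hρ1 := maxAvoid_lt_one G v hne hdeg hwalk
  have hc : (0:ℝ) ≤ (m : ℝ) * (1 - ρ)⁻¹ := by
    have h01 : (0:ℝ) < 1 - ρ := by linarith
    have : (0:ℝ) ≤ (1 - ρ)⁻¹ := by positivity
    positivity
  refine summable_of_sum_range_le (c := (m : ℝ) * (1 - ρ)⁻¹)
    (fun n => mul_nonneg (Nat.cast_nonneg n) (firstHitProb_nonneg G u v n)) (fun K => ?_)
  match K with
  | 0 => simpa using hc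
  | M + 1 =>
    rw [partial_id G v hdeg M u]
    have h1 : ∑ n ∈ Finset.range M, avoidR G v n u ≤ (m : ℝ) * (1 - ρ)⁻¹ := by
      calc ∑ n ∈ Finset.range M, avoidR G v n u
          ≤ ∑ n ∈ Finset.range M, ρ ^ (n / m) :=
            Finset.sum_le_sum fun n _ => avoidR_le_pow G v hne hm n u hu
        _ ≤ (m : ℝ) * (1 - ρ)⁻¹ := sum_pow_div_le hρ0 hρ1 hm M
    have h2 : (0:ℝ) ≤ (M : ℝ) * avoidR G v M u :=
      mul_nonneg (Nat.cast_nonneg M) (avoidR_nonneg G v M u)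
    linarith

lemma tendsto_M_avoidR {u : V} (hu : u ≠ v) :
    Tendsto (fun M : ℕ => (M : ℝ) * avoidR G v M u) atTop (𝓝 0) := by
  set ρ := maxAvoid G v hne m with hρdef
  have hρ0 := maxAvoid_nonneg G v hne m
  have hρ1 := maxAvoid_lt_one G v hne hdeg hwalk
  set ψ : ℕ → ℝ := fun k => (m : ℝ) * ((k : ℝ) * ρ ^ k) + (m : ℝ) * ρ ^ k with hψdef
  have hupper : ∀ M : ℕ, (M : ℝ) * avoidR G v M u ≤ ψ (M / m) := by
    intro M
    have hlt : M < m * (M / m) + m := by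
      have h1 := Nat.div_add_mod M m
      have h2 := Nat.mod_lt M hm
      omega
    have hMle : (M : ℝ) ≤ (m : ℝ) * ((M / m : ℕ) : ℝ) + (m : ℝ) := by
      have := (Nat.cast_le (α := ℝ)).mpr hlt.le
      push_cast at this ⊢
      linarith
    have hav := avoidR_le_pow G v hne hm M u hu
    have hav0 := avoidR_nonneg G v M u
    have hpow0 : (0:ℝ) ≤ ρ ^ (M / m) := by positivity
    calc (M : ℝ) * avoidR G v M u
        ≤ ((m : ℝ) * ((M / m : ℕ) : ℝ) + (m : ℝ)) * ρ ^ (M / m) := by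
          refine mul_le_mul hMle hav hav0 ?_
          positivity
      _ = ψ (M / m) := by rw [hψdef]; ring
  have hψ0 : Tendsto ψ atTop (𝓝 0) := by
    have hnorm : ‖ρ‖ < 1 := by rwa [Real.norm_eq_abs, abs_of_nonneg hρ0]
    have s1 : Summable (fun k : ℕ => (k : ℝ) * ρ ^ k) := by
      simpa using summable_pow_mul_geometric_of_norm_lt_one 1 hnorm
    have t1 := s1.tendsto_atTop_zero
    have t2 := tendsto_pow_atTop_nhds_zero_of_lt_one hρ0 hρ1
    have := ((t1.const_mul (m : ℝ)).add (t2.const_mul (m : ℝ)))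
    simpa using this
  have hdiv : Tendsto (fun M : ℕ => M / m) atTop atTop :=
    le_of_eq (Filter.map_div_atTop_eq_nat m hm)
  have hcomp : Tendsto (fun M : ℕ => ψ (M / m)) atTop (𝓝 0) := hψ0.comp hdiv
  refine tendsto_of_tendsto_of_tendsto_of_le_of_le tendsto_const_nhds hcomp ?_ hupper
  exact fun M => mul_nonneg (Nat.cast_nonneg M) (avoidR_nonneg G v M u)

lemma tsum_nfh {u : V} (hu : u ≠ v) :
    ∑' n : ℕ, (n : ℝ) * firstHitProb G u v n = ∑' n : ℕ, avoidR G v n u := by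
  have hA := (summable_avoidR G v hdeg hne hm hwalk hu).hasSum.tendsto_sum_nat
  have hB := (summable_nfh G v hdeg hne hm hwalk hu).hasSum.tendsto_sum_nat
  have hB' : Tendsto (fun M : ℕ => ∑ n ∈ Finset.range (M + 1), (n : ℝ) * firstHitProb G u v n)
      atTop (𝓝 (∑' n : ℕ, (n : ℝ) * firstHitProb G u v n)) :=
    hB.comp (tendsto_add_atTop_nat 1)
  have hC : Tendsto (fun M : ℕ =>
      (∑ n ∈ Finset.range M, avoidR G v n u) - M * avoidR G v M u) atTop
      (𝓝 ((∑' n : ℕ, avoidR G v n u) - 0)) :=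
    hA.sub (tendsto_M_avoidR G v hdeg hne hm hwalk hu)
  have hfun : (fun M : ℕ => ∑ n ∈ Finset.range (M + 1), (n : ℝ) * firstHitProb G u v n)
      = (fun M : ℕ => (∑ n ∈ Finset.range M, avoidR G v n u) - M * avoidR G v M u) :=
    funext fun M => partial_id G v hdeg M u
  rw [hfun] at hB'
  have := tendsto_nhds_unique hB' hC
  rw [this, sub_zero]

lemma E_equation {u : V} (hu : u ≠ v) :
    ∑' n : ℕ, avoidR G v n u
      = 1 + ∑ x : V, (if x = v then 0
          else stepProb G u x * ∑' n : ℕ, avoidR G v n x) := by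
  rw [Summable.tsum_eq_zero_add (summable_avoidR G v hdeg hne hm hwalk hu)]
  have h00 : avoidR G v 0 u = 1 := by rw [avoidR]
  rw [h00]
  have h1 : (fun n : ℕ => avoidR G v (n + 1) u)
      = fun n : ℕ => ∑ x : V, (if x = v then 0 else stepProb G u x * avoidR G v n x) :=
    funext fun n => avoidR_succ G v n u
  have h2 : ∀ x : V, Summable (fun n : ℕ =>
      (if x = v then 0 else stepProb G u x * avoidR G v n x)) := by
    intro x
    by_cases hx : x = v
    · simpa [hx] using summable_zero
    · simpa [hx] using (summable_avoidR G v hdeg hne hm hwalk hx).mul_left (stepProb G u x)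
  rw [h1, Summable.tsum_finsetSum (fun x _ => h2 x)]
  congr 1
  refine Finset.sum_congr rfl fun x _ => ?_
  by_cases hx : x = v
  · simp [hx]
  · simp only [if_neg hx]
    exact tsum_mul_left

end Main

lemma harmonic_nonpos (hdeg : ∀ x : V, 0 < G.degree x) (hpre : G.Preconnected)
    (y : V → ℝ) (h0 : y v = 0)
    (hh : ∀ u, u ≠ v → y u = ∑ x : V, stepProb G u x * y x) : ∀ u, y u ≤ 0 := by
  by_contra hcon
  push_neg at hcon
  obtain ⟨u0, hu0⟩ := hcon
  set S := Finset.univ.image y with hS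
  have hSne : S.Nonempty := ⟨y u0, Finset.mem_image_of_mem y (Finset.mem_univ u0)⟩
  set M := S.max' hSne with hM
  have hle : ∀ x, y x ≤ M := fun x =>
    Finset.le_max' _ _ (Finset.mem_image_of_mem y (Finset.mem_univ x))
  have hMpos : 0 < M := lt_of_lt_of_le hu0 (hle u0)
  have key : ∀ (a bb : V) (p : G.Walk a bb), bb = v → y a = M → False := by
    intro a bb p
    induction p with
    | nil =>
      intro hbv ha
      rw [hbv, h0] at ha
      linarith
    | @cons a b bb hadj q ih =>
      intro hbv ha
      by_cases hav : a = v
      · rw [hav, h0] at ha; linarith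
      · have heq := hh a hav
        have hsum : ∑ x : V, stepProb G a x * (M - y x) = 0 := by
          have hexp : ∑ x : V, stepProb G a x * (M - y x)
              = M * (∑ x : V, stepProb G a x) - ∑ x : V, stepProb G a x * y x := by
            rw [Finset.mul_sum, ← Finset.sum_sub_distrib]
            exact Finset.sum_congr rfl fun x _ => by ring
          rw [hexp, sum_stepProb G a (hdeg a), mul_one, ← heq, ha, sub_self]
        have hzero := (Finset.sum_eq_zero_iff_of_nonneg
          (fun x _ => mul_nonneg (stepProb_nonneg G a x) (by linarith [hle x]))).mp hsum
        have hb := hzero b (Finset.mem_univ b)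
        have hstep := stepProb_pos G hadj
        have hyb : y b = M := by
          rcases mul_eq_zero.mp hb with h | h
          · linarith
          · linarith
        exact ih hbv hyb
  obtain ⟨u1, -, hu1⟩ := Finset.mem_image.mp (S.max'_mem hSne)
  exact key u1 v (hpre u1 v).some rfl hu1

theorem hittingTime_eq_of_solution (hdeg : ∀ x : V, 0 < G.degree x) (hpre : G.Preconnected)
    {m : ℕ} (hm : 0 < m) (hwalk : ∀ x : V, x ≠ v → ∃ p : G.Walk x v, p.length ≤ m)
    (hne : (Finset.univ.erase v).Nonempty)
    (H : V → ℝ) (hHv : H v = 0)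
    (hH : ∀ u, u ≠ v → H u = 1 + ∑ x : V, (if x = v then 0 else stepProb G u x * H x))
    (u : V) : hittingTime G u v = H u := by
  by_cases huv : u = v
  · rw [huv, hittingTime, if_pos rfl, hHv]
  set E : V → ℝ := fun x => ∑' n : ℕ, avoidR G v n x with hE
  set y : V → ℝ := fun x => (if x = v then 0 else E x) - H x with hy
  have hyv : y v = 0 := by simp [hy, hHv]
  have hharm : ∀ a, a ≠ v → y a = ∑ x : V, stepProb G a x * y x := by
    intro a ha
    have hEa := E_equation G v hdeg hne hm hwalk ha
    have hHa := hH a ha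
    have hterm : ∀ x : V, stepProb G a x * y x
        = (if x = v then 0 else stepProb G a x * E x)
          - (if x = v then 0 else stepProb G a x * H x) := by
      intro x
      by_cases hx : x = v
      · simp [hx, hy, hHv]
      · simp only [hy, if_neg hx]
        ring
    calc y a = E a - H a := by rw [hy]; simp [if_neg ha]
      _ = (1 + ∑ x : V, (if x = v then 0 else stepProb G a x * E x))
          - (1 + ∑ x : V, (if x = v then 0 else stepProb G a x * H x)) := by
            rw [← hEa, ← hHa]
      _ = ∑ x : V, ((if x = v then 0 else stepProb G a x * E x)
          - (if x = v then 0 else stepProb G a x * H x)) := by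
            rw [Finset.sum_sub_distrib]; ring
      _ = ∑ x : V, stepProb G a x * y x :=
            (Finset.sum_congr rfl fun x _ => (hterm x).symm)
  have hpos : ∀ x, y x ≤ 0 := harmonic_nonpos G v hdeg hpre y hyv hharm
  have hneg : ∀ x, (-y) x ≤ 0 := by
    refine harmonic_nonpos G v hdeg hpre (-y) (by simp [hyv]) ?_
    intro a ha
    have := hharm a ha
    simp only [Pi.neg_apply]
    rw [this, ← Finset.sum_neg_distrib]
    exact Finset.sum_congr rfl fun x _ => by ring
  have hy0 : y u = 0 := le_antisymm (hpos u) (by have := hneg u; simp at this; linarith)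
  have hEH : E u = H u := by
    have := hy0
    rw [hy] at this
    simp only [if_neg huv] at this
    linarith
  rw [hittingTime, if_neg huv, tsum_nfh G v hdeg hne hm hwalk huv]
  exact hEH

end HT
namespace HT

variable {d h : ℕ}

/-- Vertex type of the complete `d`-ary tree. -/
abbrev Vtx (d h : ℕ) := Σ n : Fin (h + 1), Fin (n : ℕ) → Fin d

/-- Depth of a vertex. -/
abbrev dep (x : Vtx d h) : ℕ := (x.1 : ℕ)

lemma dep_le (x : Vtx d h) : dep x ≤ h := Nat.lt_succ_iff.mp x.1.isLt

lemma vcoord {x y : Vtx d h} (hxy : x = y) (i : ℕ) (hx : i < dep x) (hy : i < dep y) :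
    x.2 ⟨i, hx⟩ = y.2 ⟨i, hy⟩ := by
  subst hxy
  rfl

lemma vext {x y : Vtx d h} (h1 : dep x = dep y)
    (h2 : ∀ (i : ℕ) (hx : i < dep x) (hy : i < dep y), x.2 ⟨i, hx⟩ = y.2 ⟨i, hy⟩) :
    x = y := by
  obtain ⟨⟨n, hn⟩, fx⟩ := x
  obtain ⟨⟨n', hn'⟩, fy⟩ := y
  simp only [dep] at h1 h2
  subst h1
  have : fx = fy := by
    funext i
    have := h2 i.1 i.isLt i.isLt
    simpa using this
  rw [this]

/-- The root. -/
def rt : Vtx d h := ⟨⟨0, Nat.succ_pos h⟩, fun i => (Nat.not_lt_zero _ i.isLt).elim⟩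

@[simp] lemma dep_rt : dep (rt : Vtx d h) = 0 := rfl

/-- The parent of a vertex. -/
def par (x : Vtx d h) : Vtx d h :=
  ⟨⟨dep x - 1, lt_of_le_of_lt (Nat.sub_le _ _) x.1.isLt⟩,
    fun i => x.2 ⟨i.1, lt_of_lt_of_le i.isLt (Nat.sub_le _ _)⟩⟩

@[simp] lemma dep_par (x : Vtx d h) : dep (par x) = dep x - 1 := rfl

lemma par_coord (x : Vtx d h) (i : ℕ) (hi : i < dep (par x)) (hi' : i < dep x) :
    (par x).2 ⟨i, hi⟩ = x.2 ⟨i, hi'⟩ := rfl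

/-- A child of a vertex. -/
def chi (x : Vtx d h) (hx : dep x < h) (j : Fin d) : Vtx d h :=
  ⟨⟨dep x + 1, Nat.succ_lt_succ hx⟩, fun i =>
    if hi : (i : ℕ) < dep x then x.2 ⟨i, hi⟩ else j⟩

@[simp] lemma dep_chi (x : Vtx d h) (hx : dep x < h) (j : Fin d) :
    dep (chi x hx j) = dep x + 1 := rfl

lemma chi_coord_lt (x : Vtx d h) (hx : dep x < h) (j : Fin d) (i : ℕ)
    (hi : i < dep (chi x hx j)) (hi' : i < dep x) :
    (chi x hx j).2 ⟨i, hi⟩ = x.2 ⟨i, hi'⟩ := dif_pos hi'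

lemma chi_coord_last (x : Vtx d h) (hx : dep x < h) (j : Fin d)
    (hi : dep x < dep (chi x hx j)) :
    (chi x hx j).2 ⟨dep x, hi⟩ = j := dif_neg (lt_irrefl _)

/-- Parent relation phrased over ℕ indices. -/
def pRel (a b : Vtx d h) : Prop :=
  dep a + 1 = dep b ∧
    ∀ (i : ℕ) (hia : i < dep a) (hib : i < dep b), b.2 ⟨i, hib⟩ = a.2 ⟨i, hia⟩

lemma pRel_ne {a b : Vtx d h} (hab : pRel a b) : a ≠ b := by
  intro hh
  have := hab.1
  rw [hh] at this
  omega

lemma adj_iff (x y : Vtx d h) :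
    (daryTree d h).Adj x y ↔ pRel x y ∨ pRel y x := by
  have hrel : ∀ a b : Vtx d h,
      (∃ _ : (a.1 : ℕ) + 1 = (b.1 : ℕ),
        ∀ i : Fin (a.1 : ℕ), b.2 ⟨i.val, by have := i.isLt; omega⟩ = a.2 i) ↔ pRel a b := by
    intro a b
    constructor
    · rintro ⟨h1, h2⟩
      exact ⟨h1, fun i hia hib => h2 ⟨i, hia⟩⟩
    · rintro ⟨h1, h2⟩
      refine ⟨h1, fun i => h2 i.1 i.isLt ?_⟩
      have h3 : (i : ℕ) < dep a := i.isLt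
      omega
  rw [daryTree, SimpleGraph.fromRel_adj]
  rw [hrel, hrel]
  constructor
  · rintro ⟨-, hr⟩; exact hr
  · intro hr
    refine ⟨?_, hr⟩
    rcases hr with hr | hr
    · exact pRel_ne hr
    · exact (pRel_ne hr).symm

lemma pRel_par {x : Vtx d h} (h0 : 0 < dep x) : pRel (par x) x := by
  refine ⟨by simp; omega, fun i hia hib => ?_⟩
  exact (par_coord x i hia hib).symm

lemma pRel_chi (x : Vtx d h) (hx : dep x < h) (j : Fin d) : pRel x (chi x hx j) := by
  exact ⟨rfl, fun i hia hib => chi_coord_lt x hx j i hib hia⟩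

lemma pRel_eq_par {y x : Vtx d h} (hp : pRel y x) : y = par x ∧ 0 < dep x := by
  have h1 := hp.1
  have h0 : 0 < dep x := by omega
  refine ⟨?_, h0⟩
  refine vext (by simp; omega) fun i hy hp' => ?_
  have hp'' : i < dep x := by
    have : i < dep x - 1 := hp'
    omega
  rw [par_coord x i hp' hp'']
  exact (hp.2 i hy (by omega)).symm

lemma pRel_eq_chi {x y : Vtx d h} (hp : pRel x y) :
    ∃ (hx : dep x < h) (j : Fin d), y = chi x hx j := by
  have h1 := hp.1
  have hy := dep_le y
  have hx : dep x < h := by omega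
  refine ⟨hx, y.2 ⟨dep x, show dep x < dep y by omega⟩, ?_⟩
  refine vext (by simp; omega) fun i hyi hci => ?_
  rcases Nat.lt_or_ge i (dep x) with hi | hi
  · rw [chi_coord_lt x hx _ i hci hi]
    exact hp.2 i hi hyi
  · have hieq : i = dep x := by simp at hci; omega
    subst hieq
    rw [chi_coord_last x hx _ hci]

end HT
namespace HT
variable {d h : ℕ}

lemma adj_par {x : Vtx d h} (h0 : 0 < dep x) : (daryTree d h).Adj x (par x) :=
  (adj_iff _ _).mpr (Or.inr (pRel_par h0))

lemma adj_chi (x : Vtx d h) (hx : dep x < h) (j : Fin d) :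
    (daryTree d h).Adj x (chi x hx j) := (adj_iff _ _).mpr (Or.inl (pRel_chi x hx j))

lemma chi_injective (x : Vtx d h) (hx : dep x < h) : Function.Injective (chi x hx) := by
  intro j j' he
  have h1 := vcoord he (dep x) (Nat.lt_succ_self (dep x)) (Nat.lt_succ_self (dep x))
  exact (chi_coord_last x hx j _).symm.trans (h1.trans (chi_coord_last x hx j' _))

lemma mem_nbr (x y : Vtx d h) :
    y ∈ (daryTree d h).neighborFinset x ↔ pRel x y ∨ pRel y x := by
  rw [SimpleGraph.mem_neighborFinset, adj_iff]

lemma nbr_internal (x : Vtx d h) (h0 : 0 < dep x) (hx : dep x < h) :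
    (daryTree d h).neighborFinset x
      = insert (par x) (Finset.univ.image (chi x hx)) := by
  ext y
  rw [mem_nbr, Finset.mem_insert, Finset.mem_image]
  constructor
  · rintro (hp | hp)
    · obtain ⟨hx', j, rfl⟩ := pRel_eq_chi hp
      exact Or.inr ⟨j, Finset.mem_univ j, rfl⟩
    · exact Or.inl (pRel_eq_par hp).1
  · rintro (rfl | ⟨j, -, rfl⟩)
    · exact Or.inr (pRel_par h0)
    · exact Or.inl (pRel_chi x hx j)

lemma nbr_root (x : Vtx d h) (h0 : dep x = 0) (hh : 0 < h) :
    (daryTree d h).neighborFinset x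
      = Finset.univ.image (chi x (h0 ▸ hh)) := by
  ext y
  rw [mem_nbr, Finset.mem_image]
  constructor
  · rintro (hp | hp)
    · obtain ⟨hx', j, rfl⟩ := pRel_eq_chi hp
      exact ⟨j, Finset.mem_univ j, rfl⟩
    · exact absurd hp.1 (by omega)
  · rintro ⟨j, -, rfl⟩
    exact Or.inl (pRel_chi x _ j)

lemma nbr_leaf (x : Vtx d h) (hx : dep x = h) (hh : 0 < h) :
    (daryTree d h).neighborFinset x = {par x} := by
  ext y
  rw [mem_nbr, Finset.mem_singleton]
  constructor
  · rintro (hp | hp)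
    · exact absurd hp.1 (by have := dep_le y; omega)
    · exact (pRel_eq_par hp).1
  · rintro rfl
    exact Or.inr (pRel_par (by omega))

lemma degree_internal (x : Vtx d h) (h0 : 0 < dep x) (hx : dep x < h) :
    (daryTree d h).degree x = d + 1 := by
  rw [← SimpleGraph.card_neighborFinset_eq_degree, nbr_internal x h0 hx,
    Finset.card_insert_of_notMem, Finset.card_image_of_injective _ (chi_injective x hx)]
  · simp
  · intro hmem
    obtain ⟨j, -, hj⟩ := Finset.mem_image.mp hmem
    have hdep := congrArg dep hj
    simp only [dep_chi, dep_par] at hdep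
    omega

lemma degree_root (x : Vtx d h) (h0 : dep x = 0) (hh : 0 < h) :
    (daryTree d h).degree x = d := by
  rw [← SimpleGraph.card_neighborFinset_eq_degree, nbr_root x h0 hh,
    Finset.card_image_of_injective _ (chi_injective x _)]
  simp

lemma degree_leaf (x : Vtx d h) (hx : dep x = h) (hh : 0 < h) :
    (daryTree d h).degree x = 1 := by
  rw [← SimpleGraph.card_neighborFinset_eq_degree, nbr_leaf x hx hh]
  simp

lemma degree_pos (hd : 1 ≤ d) (hh : 0 < h) (x : Vtx d h) :
    0 < (daryTree d h).degree x := by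
  rcases Nat.lt_or_ge (dep x) h with hx | hx
  · rcases Nat.eq_zero_or_pos (dep x) with h0 | h0
    · rw [degree_root x h0 hh]; omega
    · rw [degree_internal x h0 hx]; omega
  · have : dep x = h := le_antisymm (dep_le x) hx
    rw [degree_leaf x this hh]; omega

/-- Walk to the root. -/
def toRoot : (n : ℕ) → (x : Vtx d h) → dep x = n → (daryTree d h).Walk x rt
  | 0, x, hx =>
      (SimpleGraph.Walk.nil : (daryTree d h).Walk rt rt).copy
        (vext (by simp [hx]) fun i h1 h2 => absurd h2 (by simp)).symm rfl
  | n + 1, x, hx =>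
      SimpleGraph.Walk.cons (adj_par (show 0 < dep x by omega))
        (toRoot n (par x) (by simp [hx]))

lemma toRoot_length : ∀ (n : ℕ) (x : Vtx d h) (hx : dep x = n),
    (toRoot n x hx).length = n
  | 0, x, hx => by simp [toRoot]
  | n + 1, x, hx => by
      simp [toRoot, toRoot_length n (par x) (by simp [hx])]

/-- A canonical walk between two vertices, through the root. -/
def vWalk (x y : Vtx d h) : (daryTree d h).Walk x y :=
  (toRoot (dep x) x rfl).append (toRoot (dep y) y rfl).reverse

lemma vWalk_length (x y : Vtx d h) : (vWalk x y).length = dep x + dep y := by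
  rw [vWalk, SimpleGraph.Walk.length_append, SimpleGraph.Walk.length_reverse,
    toRoot_length, toRoot_length]

lemma preconn : (daryTree d h).Preconnected := fun x y => ⟨vWalk x y⟩

end HT
namespace HT
variable {d h : ℕ}

/-- `x` and `v` agree on their first `k` coordinates. -/
def agree (v x : Vtx d h) (k : ℕ) : Prop :=
  k ≤ dep x ∧ k ≤ dep v ∧
    ∀ (i : ℕ) (hx : i < dep x) (hv : i < dep v), i < k → x.2 ⟨i, hx⟩ = v.2 ⟨i, hv⟩

lemma agree_zero (v x : Vtx d h) : agree v x 0 :=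
  ⟨Nat.zero_le _, Nat.zero_le _, fun i _ _ hi => absurd hi (Nat.not_lt_zero i)⟩

/-- Depth of the least common ancestor of `x` and `v`. -/
noncomputable def lcaD (v x : Vtx d h) : ℕ :=
  Nat.findGreatest (fun k => agree v x k) (min (dep x) (dep v))

lemma lcaD_agree (v x : Vtx d h) : agree v x (lcaD v x) :=
  Nat.findGreatest_spec (Nat.zero_le _) (agree_zero v x)

lemma lcaD_le_dep (v x : Vtx d h) : lcaD v x ≤ dep x := (lcaD_agree v x).1

lemma lcaD_le_depv (v x : Vtx d h) : lcaD v x ≤ dep v := (lcaD_agree v x).2.1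

lemma le_lcaD (v x : Vtx d h) {k : ℕ} (hk : agree v x k) : k ≤ lcaD v x :=
  Nat.le_findGreatest (le_min hk.1 hk.2.1) hk

lemma lcaD_self (v : Vtx d h) : lcaD v v = dep v :=
  le_antisymm (lcaD_le_dep v v)
    (le_lcaD v v ⟨le_refl _, le_refl _, fun i hx hv _ => rfl⟩)

lemma eq_of_anc (v x : Vtx d h) (hℓ : lcaD v x = dep x) (hdv : dep x = dep v) : x = v := by
  refine vext hdv fun i hx hv => ?_
  exact (lcaD_agree v x).2.2 i hx hv (by omega)

lemma anc_dep_lt (v x : Vtx d h) (hxv : x ≠ v) (hℓ : lcaD v x = dep x) : dep x < dep v := by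
  have h1 := lcaD_le_depv v x
  rcases Nat.lt_or_ge (dep x) (dep v) with hc | hc
  · exact hc
  · exact absurd (eq_of_anc v x hℓ (by omega)) hxv

lemma lcaD_par_anc (v x : Vtx d h) (hℓ : lcaD v x = dep x) (h0 : 0 < dep x) :
    lcaD v (par x) = dep x - 1 := by
  refine le_antisymm ?_ ?_
  · have := lcaD_le_dep v (par x)
    simpa using this
  · refine le_lcaD v (par x) ⟨by simp, by have := lcaD_le_depv v x; omega, ?_⟩
    intro i hx hv hi
    rw [par_coord x i hx (by omega)]
    exact (lcaD_agree v x).2.2 i (by omega) hv (by omega)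

lemma lcaD_par_nonanc (v x : Vtx d h) (hℓ : lcaD v x < dep x) (h0 : 0 < dep x) :
    lcaD v (par x) = lcaD v x := by
  have hag := lcaD_agree v x
  refine le_antisymm ?_ ?_
  · have hagp := lcaD_agree v (par x)
    refine le_lcaD v x ⟨?_, hagp.2.1, ?_⟩
    · have := lcaD_le_dep v (par x)
      simp at this
      omega
    · intro i hx hv hi
      have hip : i < dep (par x) := by
        have := lcaD_le_dep v (par x)
        simp at this ⊢
        omega
      rw [← par_coord x i hip hx]
      exact hagp.2.2 i hip hv hi
  · refine le_lcaD v (par x) ⟨by simp; omega, hag.2.1, ?_⟩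
    intro i hx hv hi
    rw [par_coord x i hx (by omega)]
    exact hag.2.2 i (by omega) hv hi

lemma lcaD_chi_nonanc (v x : Vtx d h) (hℓ : lcaD v x < dep x) (hx : dep x < h) (j : Fin d) :
    lcaD v (chi x hx j) = lcaD v x := by
  have hag := lcaD_agree v x
  have hagc := lcaD_agree v (chi x hx j)
  have hdc : dep (chi x hx j) = dep x + 1 := rfl
  refine le_antisymm ?_ ?_
  · -- lcaD child ≤ lcaD x
    by_contra hcon
    push_neg at hcon
    have hkey : agree v x (min (lcaD v (chi x hx j)) (dep x)) := by
      refine ⟨Nat.min_le_right _ _, le_trans (Nat.min_le_left _ _) hagc.2.1, ?_⟩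
      intro i hxi hvi hi
      have hi1 : i < dep (chi x hx j) := by omega
      rw [← chi_coord_lt x hx j i hi1 hxi]
      exact hagc.2.2 i hi1 hvi (by omega)
    have := le_lcaD v x hkey
    have := lcaD_le_dep v (chi x hx j)
    omega
  · refine le_lcaD v (chi x hx j) ⟨by omega, hag.2.1, ?_⟩
    intro i hxi hvi hi
    rw [chi_coord_lt x hx j i hxi (by omega)]
    exact hag.2.2 i (by omega) hvi hi

lemma lcaD_chi_anc (v x : Vtx d h) (hℓ : lcaD v x = dep x) (hxv : dep x < dep v)
    (hx : dep x < h) (j : Fin d) :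
    lcaD v (chi x hx j) = if j = v.2 ⟨dep x, hxv⟩ then dep x + 1 else dep x := by
  have hag := lcaD_agree v x
  have hagc := lcaD_agree v (chi x hx j)
  have hdc : dep (chi x hx j) = dep x + 1 := rfl
  have hcoord : ∀ (i : ℕ) (hxi : i < dep (chi x hx j)) (hvi : i < dep v), i < dep x →
      (chi x hx j).2 ⟨i, hxi⟩ = v.2 ⟨i, hvi⟩ := by
    intro i hxi hvi hi
    rw [chi_coord_lt x hx j i hxi hi]
    exact hag.2.2 i (by omega) hvi (by omega)
  split
  case isTrue hj =>
    refine le_antisymm (by have := lcaD_le_dep v (chi x hx j); omega) ?_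
    refine le_lcaD v (chi x hx j) ⟨by omega, by omega, ?_⟩
    intro i hxi hvi hi
    rcases Nat.lt_or_ge i (dep x) with hid | hid
    · exact hcoord i hxi hvi hid
    · have : i = dep x := by omega
      subst this
      rw [chi_coord_last x hx j hxi, hj]
  case isFalse hj =>
    refine le_antisymm ?_ ?_
    · by_contra hcon
      push_neg at hcon
      have hsucc : dep x < lcaD v (chi x hx j) := hcon
      have := hagc.2.2 (dep x) (by omega) hxv hsucc
      rw [chi_coord_last x hx j (by omega)] at this
      exact hj this
    · refine le_lcaD v (chi x hx j) ⟨by omega, by omega, fun i hxi hvi hi => hcoord i hxi hvi hi⟩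

lemma sum_ite_fin (j0 : Fin d) (A B : ℝ) :
    ∑ j : Fin d, (if j = j0 then A else B) = A + ((d : ℝ) - 1) * B := by
  have h1 : ∀ j : Fin d, (if j = j0 then A else B) = B + (if j = j0 then A - B else 0) :=
    fun j => by split <;> ring
  rw [Finset.sum_congr rfl fun j _ => h1 j, Finset.sum_add_distrib, Finset.sum_const,
    Finset.sum_ite_eq' Finset.univ j0 fun _ => A - B, if_pos (Finset.mem_univ j0)]
  have : ((Finset.univ : Finset (Fin d)).card : ℝ) = (d : ℝ) := by simp
  rw [nsmul_eq_mul, this]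
  ring

section Polys
variable (D : ℝ)

lemma f_zero : f 0 D = 0 := by simp [f]

lemma g_zero (k : ℕ) : g k 0 D = 0 := by simp [g]

lemma f_succ_sub (n : ℕ) :
    f (n + 1) D - f n D = 2 * (∑ i ∈ Finset.range (n + 1), D ^ i) - 1 := by
  by_cases hn : n = 0
  · subst hn
    simp [f]
  · rw [f, f, if_neg (Nat.succ_ne_zero n), if_neg hn]
    rw [Finset.sum_range_succ, Finset.sum_range_succ (fun i => D ^ i)]
    have e1 : ∑ i ∈ Finset.range n, ((2 * ((n : ℝ) + 1)) - 2 * i) * D ^ i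
        = ∑ i ∈ Finset.range n, (((2 * (n : ℝ)) - 2 * i) * D ^ i + 2 * D ^ i) := by
      refine Finset.sum_congr rfl fun i _ => ?_
      ring
    push_cast
    rw [e1, Finset.sum_add_distrib, ← Finset.mul_sum]
    push_cast
    ring

lemma g_succ_sub (m : ℕ) :
    g h (m + 1) D - g h m D = 2 * (∑ i ∈ Finset.range (m + 1), D ^ (h - i)) - 1 := by
  by_cases hm : m = 0
  · subst hm
    simp [g]
  · rw [g, g, if_neg (Nat.succ_ne_zero m), if_neg hm]
    rw [Finset.sum_range_succ, Finset.sum_range_succ (fun i => D ^ (h - i))]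
    have e1 : ∑ i ∈ Finset.range m, ((2 * ((m : ℝ) + 1)) - 2 * i) * D ^ (h - i)
        = ∑ i ∈ Finset.range m, (((2 * (m : ℝ)) - 2 * i) * D ^ (h - i) + 2 * D ^ (h - i)) := by
      refine Finset.sum_congr rfl fun i _ => ?_
      ring
    push_cast
    rw [e1, Finset.sum_add_distrib, ← Finset.mul_sum]
    push_cast
    ring

lemma f_one : f 1 D = 1 := by
  have := f_succ_sub D 0
  simp [f_zero] at this
  linarith

end Polys
end HT
namespace HT
variable {d h : ℕ}

/-- The candidate hitting-time function. -/
noncomputable def Hc (v x : Vtx d h) : ℝ :=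
  f (h - lcaD v x) (d : ℝ) - f (h - dep x) (d : ℝ)
    + g h (dep v) (d : ℝ) - g h (lcaD v x) (d : ℝ)

lemma Hc_self (v : Vtx d h) : Hc v v = 0 := by
  rw [Hc, lcaD_self]; ring

lemma par_not_mem_image (x : Vtx d h) (h0 : 0 < dep x) (hx : dep x < h) :
    par x ∉ Finset.univ.image (chi x hx) := by
  intro hmem
  obtain ⟨j, -, hj⟩ := Finset.mem_image.mp hmem
  have hdep := congrArg dep hj
  simp only [dep_chi, dep_par] at hdep
  omega

lemma Hc_harmonic (hd : 1 ≤ d) (hh : 0 < h) (v x : Vtx d h) (hxv : x ≠ v) :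
    Hc v x = 1 + ∑ z : Vtx d h,
      (@ite ℝ (z = v) (Classical.propDecidable _) 0 (stepProb (daryTree d h) x z * Hc v z)) := by
  have hstep1 : ∑ z : Vtx d h,
        (@ite ℝ (z = v) (Classical.propDecidable _) 0 (stepProb (daryTree d h) x z * Hc v z))
      = ∑ z : Vtx d h, stepProb (daryTree d h) x z * Hc v z := by
    refine Finset.sum_congr rfl fun z _ => ?_
    by_cases hz : z = v
    · rw [if_pos hz, hz, Hc_self, mul_zero]
    · rw [if_neg hz]
  have hstep2 : ∑ z : Vtx d h, stepProb (daryTree d h) x z * Hc v z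
      = (((daryTree d h).degree x : ℝ))⁻¹ * ∑ z ∈ (daryTree d h).neighborFinset x, Hc v z := by
    have hpt : ∀ z : Vtx d h, stepProb (daryTree d h) x z * Hc v z
        = if z ∈ (daryTree d h).neighborFinset x
            then (((daryTree d h).degree x : ℝ))⁻¹ * Hc v z else 0 := by
      intro z
      by_cases hz : (daryTree d h).Adj x z
      · rw [stepProb, if_pos hz, if_pos ((SimpleGraph.mem_neighborFinset _ _ _).mpr hz), one_div]
      · rw [stepProb, if_neg hz, zero_mul,
          if_neg (fun hmem => hz ((SimpleGraph.mem_neighborFinset _ _ _).mp hmem))]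
    rw [Finset.sum_congr rfl fun z _ => hpt z, Finset.sum_ite_mem, Finset.univ_inter,
      Finset.mul_sum]
  rw [hstep1, hstep2]
  suffices hsum : ∑ z ∈ (daryTree d h).neighborFinset x, Hc v z
      = (((daryTree d h).degree x : ℝ)) * (Hc v x - 1) by
    rw [hsum]
    have hdp : (0:ℝ) < (((daryTree d h).degree x : ℝ)) := by
      exact_mod_cast degree_pos hd hh x
    rw [inv_mul_cancel_left₀ hdp.ne']
    ring
  have hℓx := lcaD_le_dep v x
  have hℓv := lcaD_le_depv v x
  have hvh := dep_le v
  have hxh := dep_le x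
  rcases Nat.lt_or_ge (dep x) h with hxlt | hxge
  · rcases Nat.eq_zero_or_pos (dep x) with h0 | h0
    · -- root case
      have hℓ : lcaD v x = dep x := by omega
      have hxv' : dep x < dep v := anc_dep_lt v x hxv hℓ
      have hchi : ∀ (hq : dep x < h) (j : Fin d), Hc v (chi x hq j)
          = if j = v.2 ⟨dep x, hxv'⟩
              then g h (dep v) (d:ℝ) - g h (dep x + 1) (d:ℝ)
              else f (h - dep x) (d:ℝ) - f (h - dep x - 1) (d:ℝ)
                + g h (dep v) (d:ℝ) - g h (dep x) (d:ℝ) := by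
        intro hq j
        by_cases hj : j = v.2 ⟨dep x, hxv'⟩
        · rw [Hc, lcaD_chi_anc v x hℓ hxv' hq j, if_pos hj, if_pos hj, dep_chi,
            show h - (dep x + 1) = h - dep x - 1 from by omega]
          ring
        · rw [Hc, lcaD_chi_anc v x hℓ hxv' hq j, if_neg hj, if_neg hj, dep_chi,
            show h - (dep x + 1) = h - dep x - 1 from by omega]
      rw [nbr_root x h0 hh, Finset.sum_image (fun a _ b _ hab => chi_injective x _ hab),
        Finset.sum_congr rfl (fun j _ => hchi _ j), sum_ite_fin, degree_root x h0 hh,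
        Hc, hℓ]
      simp only [h0, Nat.sub_zero, Nat.zero_add]
      have eg1 := g_succ_sub (h := h) (d:ℝ) 0
      rw [Nat.zero_add, Finset.sum_range_one, Nat.sub_zero] at eg1
      have ef := f_succ_sub (d:ℝ) (h - 1)
      rw [show h - 1 + 1 = h from by omega] at ef
      have egeom := geom_sum_mul (d:ℝ) h
      linear_combination (-1 : ℝ) * eg1 + ((d:ℝ) - 1) * ef + 2 * egeom
    · -- internal
      rcases Nat.lt_or_ge (lcaD v x) (dep x) with hℓlt | hℓge
      · -- internal, not an ancestor of v
        have hchi : ∀ (hq : dep x < h) (j : Fin d), Hc v (chi x hq j)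
            = f (h - lcaD v x) (d:ℝ) - f (h - dep x - 1) (d:ℝ)
              + g h (dep v) (d:ℝ) - g h (lcaD v x) (d:ℝ) := by
          intro hq j
          rw [Hc, lcaD_chi_nonanc v x hℓlt hq j, dep_chi,
            show h - (dep x + 1) = h - dep x - 1 from by omega]
        have hpar : Hc v (par x)
            = f (h - lcaD v x) (d:ℝ) - f (h - dep x + 1) (d:ℝ)
              + g h (dep v) (d:ℝ) - g h (lcaD v x) (d:ℝ) := by
          rw [Hc, lcaD_par_nonanc v x hℓlt h0, dep_par,
            show h - (dep x - 1) = h - dep x + 1 from by omega]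
        rw [nbr_internal x h0 hxlt, Finset.sum_insert (par_not_mem_image x h0 hxlt),
          Finset.sum_image (fun a _ b _ hab => chi_injective x _ hab),
          Finset.sum_congr rfl (fun j _ => hchi _ j), Finset.sum_const, Finset.card_univ,
          Fintype.card_fin, nsmul_eq_mul, degree_internal x h0 hxlt, hpar, Hc]
        have e1 := f_succ_sub (d:ℝ) (h - dep x)
        have e2 := f_succ_sub (d:ℝ) (h - dep x - 1)
        rw [show h - dep x - 1 + 1 = h - dep x from by omega] at e2
        have e3 := geom_sum_succ (x := (d:ℝ)) (n := h - dep x)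
        push_cast
        linear_combination (-1 : ℝ) * e1 + (d:ℝ) * e2 - 2 * e3
      · -- internal ancestor
        have hℓ : lcaD v x = dep x := by omega
        have hxv' : dep x < dep v := anc_dep_lt v x hxv hℓ
        have hchi : ∀ (hq : dep x < h) (j : Fin d), Hc v (chi x hq j)
            = if j = v.2 ⟨dep x, hxv'⟩
                then g h (dep v) (d:ℝ) - g h (dep x + 1) (d:ℝ)
                else f (h - dep x) (d:ℝ) - f (h - dep x - 1) (d:ℝ)
                  + g h (dep v) (d:ℝ) - g h (dep x) (d:ℝ) := by
          intro hq j
          by_cases hj : j = v.2 ⟨dep x, hxv'⟩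
          · rw [Hc, lcaD_chi_anc v x hℓ hxv' hq j, if_pos hj, if_pos hj, dep_chi,
              show h - (dep x + 1) = h - dep x - 1 from by omega]
            ring
          · rw [Hc, lcaD_chi_anc v x hℓ hxv' hq j, if_neg hj, if_neg hj, dep_chi,
              show h - (dep x + 1) = h - dep x - 1 from by omega]
        have hpar : Hc v (par x)
            = f (h - (dep x - 1)) (d:ℝ) - f (h - (dep x - 1)) (d:ℝ)
              + g h (dep v) (d:ℝ) - g h (dep x - 1) (d:ℝ) := by
          rw [Hc, lcaD_par_anc v x hℓ h0, dep_par]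
        rw [nbr_internal x h0 hxlt, Finset.sum_insert (par_not_mem_image x h0 hxlt),
          Finset.sum_image (fun a _ b _ hab => chi_injective x _ hab),
          Finset.sum_congr rfl (fun j _ => hchi _ j), sum_ite_fin,
          degree_internal x h0 hxlt, hpar, Hc, hℓ]
        have eg1 := g_succ_sub (h := h) (d:ℝ) (dep x)
        have eg2 := g_succ_sub (h := h) (d:ℝ) (dep x - 1)
        rw [show dep x - 1 + 1 = dep x from by omega] at eg2
        have ef := f_succ_sub (d:ℝ) (h - dep x - 1)
        rw [show h - dep x - 1 + 1 = h - dep x from by omega] at ef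
        have eT := Finset.sum_range_succ (fun i => (d:ℝ) ^ (h - i)) (dep x)
        have egeom := geom_sum_mul (d:ℝ) (h - dep x)
        push_cast
        linear_combination (-1 : ℝ) * eg1 + eg2 + ((d:ℝ) - 1) * ef - 2 * eT + 2 * egeom
  · -- leaf
    have hxeq : dep x = h := by omega
    have h0 : 0 < dep x := by omega
    have hℓlt : lcaD v x < dep x := by
      rcases Nat.lt_or_ge (lcaD v x) (dep x) with hc | hc
      · exact hc
      · have hℓ : lcaD v x = dep x := by omega
        have := anc_dep_lt v x hxv hℓ
        omega
    have hpar : Hc v (par x)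
        = f (h - lcaD v x) (d:ℝ) - f 1 (d:ℝ)
          + g h (dep v) (d:ℝ) - g h (lcaD v x) (d:ℝ) := by
      rw [Hc, lcaD_par_nonanc v x hℓlt h0, dep_par,
        show h - (dep x - 1) = 1 from by omega]
    rw [nbr_leaf x hxeq hh, Finset.sum_singleton, degree_leaf x hxeq hh, hpar, Hc,
      show h - dep x = 0 from by omega, f_one, f_zero]
    push_cast
    ring

end HT
theorem stmt_16 (d h : ℕ) (hd : 1 ≤ d)
    (u v c : Σ n : Fin (h + 1), Fin (n : ℕ) → Fin d)
    (hcu : isAncestor c u) (hcv : isAncestor c v)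
    (hlca : ∀ a, isAncestor a u → isAncestor a v → (a.1 : ℕ) ≤ (c.1 : ℕ)) :
    hittingTime (daryTree d h) u v =
      f (h - (c.1 : ℕ)) d - f (h - (u.1 : ℕ)) d + g h (v.1 : ℕ) d - g h (c.1 : ℕ) d := by
  classical
  obtain ⟨hcu1, hcu2⟩ := hcu
  obtain ⟨hcv1, hcv2⟩ := hcv
  rcases Nat.eq_zero_or_pos h with hh0 | hh
  · -- height 0 : single vertex
    have huv : u = v := by
      refine HT.vext ?_ ?_
      · have := HT.dep_le u; have := HT.dep_le v; omega
      · intro i hx hy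
        exact absurd hx (by have := HT.dep_le u; omega)
    have hc0 : (c.1 : ℕ) = 0 := by have := HT.dep_le c; omega
    have hu0 : (u.1 : ℕ) = 0 := by have := HT.dep_le u; omega
    have hv0 : (v.1 : ℕ) = 0 := by have := HT.dep_le v; omega
    rw [hittingTime, if_pos huv, hc0, hu0, hv0, hh0]
    simp [f, g]
  · by_cases huv : u = v
    · subst huv
      have h2 : (u.1 : ℕ) ≤ (c.1 : ℕ) :=
        hlca u ⟨le_refl _, fun i => rfl⟩ ⟨le_refl _, fun i => rfl⟩
      have hceq : (c.1 : ℕ) = (u.1 : ℕ) := by omega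
      rw [hittingTime, if_pos rfl, hceq]
      ring
    · have hm : 0 < 2 * h := by omega
      have hwalk : ∀ x : HT.Vtx d h, x ≠ v →
          ∃ p : (daryTree d h).Walk x v, p.length ≤ 2 * h := by
        intro x _
        refine ⟨HT.vWalk x v, ?_⟩
        rw [HT.vWalk_length]
        have := HT.dep_le (d := d) (h := h) x
        have := HT.dep_le (d := d) (h := h) v
        omega
      have hmain := HT.hittingTime_eq_of_solution (daryTree d h) v
        (HT.degree_pos hd hh) HT.preconn hm hwalk
        ⟨u, @Finset.mem_erase_of_ne_of_mem _ (fun a b => Classical.propDecidable (a = b)) _ _ _ huv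
          (Finset.mem_univ u)⟩ (HT.Hc v) (HT.Hc_self v)
        (fun a ha => HT.Hc_harmonic hd hh v a ha) u
      rw [hmain, HT.Hc]
      have hlcaD : HT.lcaD v u = (c.1 : ℕ) := by
        refine le_antisymm ?_ ?_
        · -- lcaD ≤ dep c via maximality hlca
          set k := HT.lcaD v u with hk
          have hag := HT.lcaD_agree v u
          have hkd : k ≤ (u.1 : ℕ) := hag.1
          have hkv : k ≤ (v.1 : ℕ) := hag.2.1
          have hkh : k < h + 1 := by have := HT.dep_le u; omega
          set a : HT.Vtx d h := ⟨⟨k, hkh⟩, fun i => u.2 ⟨i.1, lt_of_lt_of_le i.isLt hkd⟩⟩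
            with ha
          have hau : isAncestor a u := ⟨hkd, fun i => rfl⟩
          have hav : isAncestor a v := by
            refine ⟨hkv, fun i => ?_⟩
            exact hag.2.2 i.1 (lt_of_lt_of_le i.isLt hkd) (lt_of_lt_of_le i.isLt hkv) i.isLt
          exact hlca a hau hav
        · -- dep c ≤ lcaD
          refine HT.le_lcaD v u ⟨hcu1, hcv1, ?_⟩
          intro i hx hv hi
          have e1 := hcu2 ⟨i, hi⟩
          have e2 := hcv2 ⟨i, hi⟩
          exact (e1.symm.trans e2 : _)
      rw [hlcaD]
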